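/- Let V be a finite set and let D_1, D_2 be DAGs on V with the same skeleton and the same unshielded colliders (i.e., Markov-equivalent DAGs). Then for every collection of finite nonempty sets 𝒳_i (i∈V), every strictly positive pmf p on ∏_{i∈V}𝒳_i, and every configuration v, ∏_{i∈V} p(v_i | v_{Pa_{D_1}(i)}) = ∏_{i∈V} p(v_i | v_{Pa_{D_2}(i)}). -/

import Mathlib

open scoped Classical

/-- A partially directed graph on vertex type `V`: directed edges `dir i j` (i→j) and
undirected edges `undir i j` (i—j), with at most one edge between any two vertices. -/
structure PDG (V : Type) where
  dir : V → V → Prop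
  undir : V → V → Prop
  undir_symm : ∀ i j, undir i j → undir j i
  undir_irrefl : ∀ i, ¬ undir i i
  dir_irrefl : ∀ i, ¬ dir i i
  not_dir_dir : ∀ i j, dir i j → ¬ dir j i
  not_dir_undir : ∀ i j, dir i j → ¬ undir i j

namespace PDG

variable {V : Type}

/-- Adjacency: joined by some edge. -/
def Adj (G : PDG V) (i j : V) : Prop := G.dir i j ∨ G.dir j i ∨ G.undir i j

/-- A semi-directed step from `i` to `j`: an undirected edge or a directed edge `i→j`. -/
def SStep (G : PDG V) (i j : V) : Prop := G.dir i j ∨ G.undir i j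

/-- Existence of a semi-directed cycle: `f 0, …, f m` with `f 0 = f m`, `m ≥ 2`,
each consecutive pair a semi-directed step, at least one step directed. -/
def HasSemiDirectedCycle (G : PDG V) : Prop :=
  ∃ (m : ℕ) (f : ℕ → V), 2 ≤ m ∧ f 0 = f m ∧
    (∀ i < m, G.SStep (f i) (f (i + 1))) ∧ (∃ i < m, G.dir (f i) (f (i + 1)))

/-- Strictly acyclic: no semi-directed cycle. -/
def StrictlyAcyclic (G : PDG V) : Prop := ¬ G.HasSemiDirectedCycle

/-- Joined by a path of undirected edges (possibly trivial). -/
def sameChain (G : PDG V) (i j : V) : Prop := Relation.ReflTransGen G.undir i j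

/-- The chain component of a vertex. -/
def chainComp (G : PDG V) (i : V) : Set V := {j | G.sameChain i j}

/-- Parents of a vertex set. -/
def Pa (G : PDG V) (D : Set V) : Set V := {i | ∃ d ∈ D, G.dir i d}

/-- Ancestors of a vertex set (directed path, possibly of length 0). -/
def An (G : PDG V) (D : Set V) : Set V := {i | ∃ d ∈ D, Relation.ReflTransGen G.dir i d}

/-- A DAG: only directed edges, and no directed cycles. -/
def IsDAG (G : PDG V) : Prop :=
  (∀ i j, ¬ G.undir i j) ∧ ∀ i, ¬ Relation.TransGen G.dir i i

/-- Unshielded collider `(i, k, j)`: `i→k ← j` with `i`, `j` distinct and non-adjacent. -/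
def UC (G : PDG V) (i k j : V) : Prop :=
  i ≠ j ∧ G.dir i k ∧ G.dir j k ∧ ¬ G.Adj i j

/-- `D ∈ [G]`: `D` is a DAG with the same skeleton as `G`, containing every directed edge
of `G`, all of whose unshielded colliders are unshielded colliders of `G`. -/
def InClass (D G : PDG V) : Prop :=
  D.IsDAG ∧ (∀ i j, D.Adj i j ↔ G.Adj i j) ∧ (∀ i j, G.dir i j → D.dir i j) ∧
    (∀ i k j, D.UC i k j → G.UC i k j)

/-- `C` is a nonempty set, connected by undirected edges within `C`, receiving a directed
edge from `I` and one from `J`. -/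
def ComplexCand (G : PDG V) (I : V) (C : Set V) (J : V) : Prop :=
  C.Nonempty ∧
  (∀ a ∈ C, ∀ b ∈ C,
    Relation.ReflTransGen (fun x y => G.undir x y ∧ x ∈ C ∧ y ∈ C) a b) ∧
  (∃ c ∈ C, G.dir I c) ∧ (∃ c ∈ C, G.dir J c)

/-- Minimal complex `(I, C, J)` of `G`. -/
def MinimalComplex (G : PDG V) (I : V) (C : Set V) (J : V) : Prop :=
  I ≠ J ∧ ¬ G.Adj I J ∧ (∀ a ∈ C, ∀ b ∈ C, G.sameChain a b) ∧
  G.ComplexCand I C J ∧ ∀ C' ⊂ C, ¬ G.ComplexCand I C' J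

/-- Remove all directed edges pointing into `S`. -/
def removeInto (G : PDG V) (S : Set V) : PDG V where
  dir i j := G.dir i j ∧ j ∉ S
  undir := G.undir
  undir_symm := G.undir_symm
  undir_irrefl := G.undir_irrefl
  dir_irrefl i h := G.dir_irrefl i h.1
  not_dir_dir i j h h' := G.not_dir_dir i j h.1 h'.1
  not_dir_undir i j h h' := G.not_dir_undir i j h.1 h'

/-- Induced subgraph on the vertex set `D` (kept on the same vertex type; edges
outside `D` are discarded). -/
def induce (G : PDG V) (D : Set V) : PDG V where
  dir i j := G.dir i j ∧ i ∈ D ∧ j ∈ D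
  undir i j := G.undir i j ∧ i ∈ D ∧ j ∈ D
  undir_symm i j h := ⟨G.undir_symm i j h.1, h.2.2, h.2.1⟩
  undir_irrefl i h := G.undir_irrefl i h.1
  dir_irrefl i h := G.dir_irrefl i h.1
  not_dir_dir i j h h' := G.not_dir_dir i j h.1 h'.1
  not_dir_undir i j h h' := G.not_dir_undir i j h.1 h'.1

/-- `G(↛X)`: `G` with every directed edge into `X ∩ An_G(Y)` removed. -/
def noInto (G : PDG V) (X Y : Set V) : PDG V := G.removeInto (X ∩ G.An Y)

/-- `RM(G; X, Y)`: the induced subgraph of `G(↛X)` on `An_{G(↛X)}(Y)`. -/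
def RM (G : PDG V) (X Y : Set V) : PDG V :=
  (G.noInto X Y).induce ((G.noInto X Y).An Y)

/-- There is a proper semi-directed path from `X` to `Y` starting with an undirected
edge: distinct vertices `f 0 ∈ X, …, f m ∈ Y`, only `f 0` in `X`, each consecutive pair a
semi-directed step, the first edge undirected. -/
def HasProperUndirStartPath (G : PDG V) (X Y : Set V) : Prop :=
  ∃ (m : ℕ) (f : ℕ → V), 1 ≤ m ∧
    (∀ i ≤ m, ∀ j ≤ m, f i = f j → i = j) ∧
    f 0 ∈ X ∧ f m ∈ Y ∧ (∀ i < m, G.SStep (f i) (f (i + 1))) ∧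
    (∀ i, 1 ≤ i → i ≤ m → f i ∉ X) ∧ G.undir (f 0) (f 1)

/-- Membership in the chain decomposition `CD_G(D)`: the nonempty intersections of `D`
with chain components of `G`. -/
def CDmem (G : PDG V) (D S : Set V) : Prop :=
  S.Nonempty ∧ ∃ i, S = D ∩ G.chainComp i

end PDG

noncomputable section Prob

open PDG

variable {V : Type} [Fintype V] [DecidableEq V] {𝒳 : V → Type} [∀ i, Fintype (𝒳 i)]
  [∀ i, Nonempty (𝒳 i)]

/-- Marginal `p_S(v_S)`: sum of `p` over configurations agreeing with `v` on `S`. -/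
def marginal (p : (∀ i, 𝒳 i) → ℝ) (S : Set V) (v : ∀ i, 𝒳 i) : ℝ :=
  ∑ w : ∀ i, 𝒳 i, if ∀ i ∈ S, w i = v i then p w else 0

/-- Conditional `p(v_A | v_S) = p_{A∪S}(v_{A∪S}) / p_S(v_S)`. -/
def condP (p : (∀ i, 𝒳 i) → ℝ) (A S : Set V) (v : ∀ i, 𝒳 i) : ℝ :=
  marginal p (A ∪ S) v / marginal p S v

/-- A strictly positive pmf. -/
def IsPositivePMF (p : (∀ i, 𝒳 i) → ℝ) : Prop :=
  (∀ v, 0 < p v) ∧ ∑ v : ∀ i, 𝒳 i, p v = 1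

/-- `p` factorizes according to the DAG `D`. -/
def FactorizesDAG (p : (∀ i, 𝒳 i) → ℝ) (D : PDG V) : Prop :=
  ∀ v, p v = ∏ i : V, condP p {i} (D.Pa {i}) v

/-- The (finitely many) chain components of `G`. -/
def chainComponents (G : PDG V) : Finset (Set V) :=
  Finset.univ.image (fun i => G.chainComp i)

/-- The outer chain-graph factorization `∏_τ p(v_τ | v_{Pa_G(τ)})` over chain
components `τ` of `G`. -/
def chainProd (G : PDG V) (p : (∀ i, 𝒳 i) → ℝ) (v : ∀ i, 𝒳 i) : ℝ :=
  ∏ τ ∈ chainComponents G, condP p τ (G.Pa τ) v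

/-- The product `∏_j p(v_{D_j} | v_{Pa_G(D_j)})` over the chain decomposition
`CD_G(D) = {D_1,…,D_k}` (empty intersections contribute a factor `1`). -/
def cdProd (G : PDG V) (p : (∀ i, 𝒳 i) → ℝ) (D : Set V) (v : ∀ i, 𝒳 i) : ℝ :=
  ∏ τ ∈ chainComponents G, condP p (D ∩ τ) (G.Pa (D ∩ τ)) v

/-- The identification formula (g-formula) of Perković's theorem:
`Σ_b ∏_j p(b_j | pa_G(B_j))` where `{B_1,…,B_k} = CD_G(An_{G_{V∖X}}(Y))`,
the sum running over configurations of `B = An_{G_{V∖X}}(Y) ∖ Y`, all other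
coordinates (in particular the intervened values on `X` and the values on `Y`)
being fixed by `v`. -/
def gFormula (G : PDG V) (p : (∀ i, 𝒳 i) → ℝ) (X Y : Set V) (v : ∀ i, 𝒳 i) : ℝ :=
  ∑ w : ∀ i, 𝒳 i,
    if ∀ i, i ∉ (G.induce Xᶜ).An Y \ Y → w i = v i then
      cdProd G p ((G.induce Xᶜ).An Y) w
    else 0

/-- The re-weighting formula `Σ_{v'} p(v) / ∏_j p(x_j | pa_G(X_j))`, where
`{X_1,…,X_m} = CD_G(X ∩ An_G(Y))` and the sum runs over configurations of
`V ∖ (X ∪ Y)`, the coordinates on `X ∪ Y` being fixed by `v`. -/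
def rwFormula (G : PDG V) (p : (∀ i, 𝒳 i) → ℝ) (X Y : Set V) (v : ∀ i, 𝒳 i) : ℝ :=
  ∑ w : ∀ i, 𝒳 i,
    if ∀ i ∈ X ∪ Y, w i = v i then p w / cdProd G p (X ∩ G.An Y) w else 0

/-- The `Y`-marginal of the truncated factorization of `p` with respect to the DAG `D`:
`Σ_{v_{V∖(X∪Y)}} ∏_{i ∈ V∖X} p(v_i | v_{Pa_D(i)})`, the coordinates on `X ∪ Y` being
fixed by `v`. -/
def truncMarg (D : PDG V) (p : (∀ i, 𝒳 i) → ℝ) (X Y : Set V) (v : ∀ i, 𝒳 i) : ℝ :=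
  ∑ w : ∀ i, 𝒳 i,
    if ∀ i ∈ X ∪ Y, w i = v i then
      ∏ i ∈ Finset.univ.filter (fun i => i ∉ X), condP p {i} (D.Pa {i}) w
    else 0

end Prob

section Aux

open PDG

variable {V : Type}

/-- Rank of a vertex: number of strict ancestors. -/
noncomputable def rnk [Fintype V] (G : PDG V) (i : V) : ℕ :=
  (Finset.univ.filter (fun j => Relation.TransGen G.dir j i)).card

lemma rnk_lt [Fintype V] (G : PDG V) (hac : ∀ i, ¬ Relation.TransGen G.dir i i)
    {i j : V} (hij : G.dir i j) : rnk G i < rnk G j := by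
  classical
  apply Finset.card_lt_card
  constructor
  · intro k hk
    simp only [Finset.mem_filter, Finset.mem_univ, true_and] at hk ⊢
    exact hk.tail hij
  · intro hsub
    have : i ∈ Finset.univ.filter (fun j' => Relation.TransGen G.dir j' j) := by
      simp only [Finset.mem_filter, Finset.mem_univ, true_and]
      exact Relation.TransGen.single hij
    have := hsub this
    simp only [Finset.mem_filter, Finset.mem_univ, true_and] at this
    exact hac i this

lemma dag_adj_cases (G : PDG V) (hG : G.IsDAG) {i j : V} (h : G.Adj i j) :
    G.dir i j ∨ G.dir j i := by
  rcases h with h | h | h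
  · exact Or.inl h
  · exact Or.inr h
  · exact absurd h (hG.1 i j)

lemma adj_comm (G : PDG V) {i j : V} (h : G.Adj i j) : G.Adj j i := by
  rcases h with h | h | h
  · exact Or.inr (Or.inl h)
  · exact Or.inl h
  · exact Or.inr (Or.inr (G.undir_symm i j h))

/-- Chickering's key lemma: if two Markov-equivalent DAGs differ on some edge,
there is a differing edge which is covered in the first DAG. -/
lemma exists_covered [Fintype V] (D₁ D₂ : PDG V) (h₁ : D₁.IsDAG) (h₂ : D₂.IsDAG)
    (hskel : ∀ i j : V, D₁.Adj i j ↔ D₂.Adj i j)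
    (huc : ∀ i k j : V, D₁.UC i k j ↔ D₂.UC i k j)
    (hne : ∃ a b, D₁.dir a b ∧ D₂.dir b a) :
    ∃ x y, D₁.dir x y ∧ D₂.dir y x ∧
      ∀ z, D₁.dir z y ↔ (z = x ∨ D₁.dir z x) := by
  classical
  set S : Finset (V × V) :=
    Finset.univ.filter (fun q => D₁.dir q.1 q.2 ∧ D₂.dir q.2 q.1) with hS
  have hSne : S.Nonempty := by
    obtain ⟨a, b, h⟩ := hne
    exact ⟨(a, b), by simp [hS, h.1, h.2]⟩
  obtain ⟨q₀, hq₀, hmin⟩ := S.exists_min_image (fun q => rnk D₁ q.2) hSne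
  set y := q₀.2 with hy
  set T : Finset (V × V) := S.filter (fun q => q.2 = y) with hT
  have hTne : T.Nonempty := ⟨q₀, by simp [hT, hq₀, hy]⟩
  obtain ⟨qx, hqx, hmax⟩ := T.exists_max_image (fun q => rnk D₁ q.1) hTne
  set x := qx.1 with hx
  have hqxS : qx ∈ S := (Finset.mem_filter.mp hqx).1
  have hqxy : qx.2 = y := (Finset.mem_filter.mp hqx).2
  have hxy : D₁.dir x y := by
    have := (Finset.mem_filter.mp hqxS).2.1; rwa [hqxy] at this
  have hyx : D₂.dir y x := by
    have := (Finset.mem_filter.mp hqxS).2.2; rwa [hqxy] at this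
  have hminy : ∀ q ∈ S, rnk D₁ y ≤ rnk D₁ q.2 := fun q hq => hmin q hq
  refine ⟨x, y, hxy, hyx, fun z => ?_⟩
  constructor
  · -- forward: z → y implies z = x or z → x
    intro hzy
    by_cases hzx : z = x
    · exact Or.inl hzx
    right
    -- z is adjacent to x
    have hadj : D₁.Adj z x := by
      by_contra hna
      have huc1 : D₁.UC z y x := ⟨hzx, hzy, hxy, hna⟩
      have huc2 := (huc z y x).mp huc1
      exact D₂.not_dir_dir y x hyx huc2.2.2.1
    rcases dag_adj_cases D₁ h₁ hadj with h | h
    · exact h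
    · -- D₁.dir x z : derive contradictions
      exfalso
      have hzy2 : D₂.dir z y := by
        by_contra hc
        have hadjzy : D₂.Adj z y := (hskel z y).mp (Or.inl hzy)
        rcases dag_adj_cases D₂ h₂ hadjzy with h' | h'
        · exact hc h'
        · -- (z,y) ∈ T, so rnk z ≤ rnk x, but x → z gives rnk x < rnk z
          have hmem : (z, y) ∈ T := by
            simp [hT, hS, hzy, h']
          have := hmax (z, y) hmem
          exact absurd (rnk_lt D₁ h₁.2 h) (by simpa using Nat.not_lt.mpr this)
      have hadjxz : D₂.Adj x z := (hskel x z).mp (Or.inl h)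
      rcases dag_adj_cases D₂ h₂ hadjxz with h' | h'
      · -- cycle y → x → z → y in D₂
        exact h₂.2 y (((Relation.TransGen.single hyx).tail h').tail hzy2)
      · -- (x, z) differing, head z with rnk z < rnk y : contradicts minimality
        have hmem : (x, z) ∈ S := by simp [hS, h, h']
        have := hminy (x, z) hmem
        exact absurd (rnk_lt D₁ h₁.2 hzy) (by simpa using Nat.not_lt.mpr this)
  · -- backward: z = x or z → x implies z → y
    rintro (rfl | hzx)
    · exact hxy
    -- w := z, D₁.dir z x
    have hzy : z ≠ y := by
      rintro rfl
      exact D₁.not_dir_dir x y hxy hzx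
    have hzx2 : D₂.dir z x := by
      by_contra hc
      have hadj : D₂.Adj z x := (hskel z x).mp (Or.inl hzx)
      rcases dag_adj_cases D₂ h₂ hadj with h' | h'
      · exact hc h'
      · have hmem : (z, x) ∈ S := by simp [hS, hzx, h']
        have := hminy (z, x) hmem
        exact absurd (rnk_lt D₁ h₁.2 hxy) (by simpa using Nat.not_lt.mpr this)
    by_contra hnzy
    by_cases hyz : D₁.dir y z
    · exact h₁.2 z (((Relation.TransGen.single hzx).tail hxy).tail hyz)
    · have hna : ¬ D₁.Adj z y := by
        rintro (h | h | h)
        · exact hnzy h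
        · exact hyz h
        · exact h₁.1 z y h
      have huc2 : D₂.UC z x y :=
        ⟨hzy, hzx2, hyx, fun h => hna ((hskel z y).mpr h)⟩
      have huc1 := (huc z x y).mpr huc2
      exact D₁.not_dir_dir x y hxy huc1.2.2.1

/-- Reversal of the edge x→y. -/
def PDG.rev (G : PDG V) (x y : V) (hxy : G.dir x y) : PDG V where
  dir i j := (G.dir i j ∧ ¬(i = x ∧ j = y)) ∨ (i = y ∧ j = x)
  undir := G.undir
  undir_symm := G.undir_symm
  undir_irrefl := G.undir_irrefl
  dir_irrefl i h := by
    rcases h with ⟨h, _⟩ | ⟨h1, h2⟩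
    · exact G.dir_irrefl i h
    · exact G.dir_irrefl i (by rw [← h2, ← h1] at hxy; exact hxy)
  not_dir_dir i j h h' := by
    rcases h with ⟨h, hne⟩ | ⟨h1, h2⟩
    · rcases h' with ⟨h', _⟩ | ⟨h1', h2'⟩
      · exact G.not_dir_dir i j h h'
      · exact hne ⟨h2', h1'⟩
    · rcases h' with ⟨h', hne'⟩ | ⟨h1', h2'⟩
      · exact hne' ⟨h2, h1⟩
      · exact G.dir_irrefl i (by rw [← h2', ← h1] at hxy; exact hxy)
  not_dir_undir i j h h' := by
    rcases h with ⟨h, _⟩ | ⟨h1, h2⟩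
    · exact G.not_dir_undir i j h h'
    · rw [h1, h2] at h'
      exact G.not_dir_undir x y hxy (G.undir_symm y x h')

lemma x_ne_y (G : PDG V) {x y : V} (hxy : G.dir x y) : x ≠ y :=
  fun h => G.dir_irrefl y (h ▸ hxy)

/-- The reversed-free part of G. -/
def Sdir (G : PDG V) (x y : V) : V → V → Prop :=
  fun i j => G.dir i j ∧ ¬(i = x ∧ j = y)

lemma not_transGen_S (G : PDG V) {x y : V} (hG : G.IsDAG)
    (cov : ∀ z, G.dir z y ↔ (z = x ∨ G.dir z x)) :
    ¬ Relation.TransGen (Sdir G x y) x y := by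
  intro h
  obtain ⟨b, hab, hbc⟩ := (Relation.TransGen.tail'_iff).mp h
  have hbx : b ≠ x := fun h' => hbc.2 ⟨h', rfl⟩
  have hbdx : G.dir b x := ((cov b).mp hbc.1).resolve_left hbx
  have hxb : Relation.ReflTransGen G.dir x b :=
    Relation.ReflTransGen.mono (r := Sdir G x y) (fun i j h => h.1) _ _ hab
  exact hG.2 x (Relation.TransGen.tail' hxb hbdx)

lemma rev_decomp (G : PDG V) {x y : V} (hxy : G.dir x y) :
    ∀ a b, Relation.TransGen ((G.rev x y hxy).dir) a b →
    Relation.TransGen (Sdir G x y) a b ∨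
      (Relation.ReflTransGen (Sdir G x y) a y ∧ Relation.ReflTransGen (Sdir G x y) x b) := by
  intro a b h
  induction h with
  | single h =>
    rcases h with h | ⟨h1, h2⟩
    · exact Or.inl (Relation.TransGen.single h)
    · rw [h1, h2]
      exact Or.inr ⟨Relation.ReflTransGen.refl, Relation.ReflTransGen.refl⟩
  | tail h1 h2 ih =>
    rcases h2 with h2 | ⟨h1', h2'⟩
    · rcases ih with ih | ⟨iha, ihb⟩
      · exact Or.inl (ih.tail h2)
      · exact Or.inr ⟨iha, ihb.tail h2⟩
    · rw [h2']
      rcases ih with ih | ⟨iha, ihb⟩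
      · rw [h1'] at ih
        exact Or.inr ⟨ih.to_reflTransGen, Relation.ReflTransGen.refl⟩
      · exact Or.inr ⟨iha, Relation.ReflTransGen.refl⟩

lemma rev_acyclic (G : PDG V) {x y : V} (hxy : G.dir x y) (hG : G.IsDAG)
    (cov : ∀ z, G.dir z y ↔ (z = x ∨ G.dir z x)) :
    ∀ i, ¬ Relation.TransGen ((G.rev x y hxy).dir) i i := by
  intro i h
  rcases rev_decomp G hxy i i h with h' | ⟨h1, h2⟩
  · exact hG.2 i (Relation.TransGen.mono (r := Sdir G x y) (fun a b h => h.1) _ _ h')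
  · have hxy' : Relation.ReflTransGen (Sdir G x y) x y := h2.trans h1
    rcases (Relation.reflTransGen_iff_eq_or_transGen.mp hxy') with h' | h'
    · exact x_ne_y G hxy h'.symm
    · exact not_transGen_S G hG cov h'

lemma rev_isDAG (G : PDG V) {x y : V} (hxy : G.dir x y) (hG : G.IsDAG)
    (cov : ∀ z, G.dir z y ↔ (z = x ∨ G.dir z x)) :
    (G.rev x y hxy).IsDAG :=
  ⟨fun i j => hG.1 i j, rev_acyclic G hxy hG cov⟩

lemma rev_adj (G : PDG V) {x y : V} (hxy : G.dir x y) :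
    ∀ i j, (G.rev x y hxy).Adj i j ↔ G.Adj i j := by
  intro i j
  show ((G.dir i j ∧ _) ∨ _) ∨ ((G.dir j i ∧ _) ∨ _) ∨ _ ↔ _
  constructor
  · rintro ((⟨h, _⟩ | ⟨h1, h2⟩) | (⟨h, _⟩ | ⟨h1, h2⟩) | h)
    · exact Or.inl h
    · rw [h1, h2]; exact Or.inr (Or.inl hxy)
    · exact Or.inr (Or.inl h)
    · rw [h1, h2]; exact Or.inl hxy
    · exact Or.inr (Or.inr h)
  · rintro (h | h | h)
    · by_cases hc : i = x ∧ j = y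
      · exact Or.inr (Or.inl (Or.inr ⟨hc.2, hc.1⟩))
      · exact Or.inl (Or.inl ⟨h, hc⟩)
    · by_cases hc : j = x ∧ i = y
      · exact Or.inl (Or.inr ⟨hc.2, hc.1⟩)
      · exact Or.inr (Or.inl (Or.inl ⟨h, hc⟩))
    · exact Or.inr (Or.inr h)

lemma rev_uc (G : PDG V) {x y : V} (hxy : G.dir x y)
    (cov : ∀ z, G.dir z y ↔ (z = x ∨ G.dir z x)) :
    ∀ i k j, (G.rev x y hxy).UC i k j ↔ G.UC i k j := by
  intro i k j
  constructor
  · rintro ⟨hij, h1, h2, hna⟩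
    have hna' : ¬ G.Adj i j := fun h => hna ((rev_adj G hxy i j).mpr h)
    rcases h1 with ⟨h1, _⟩ | ⟨hi, hk⟩
    · rcases h2 with ⟨h2, _⟩ | ⟨hj, hk⟩
      · exact ⟨hij, h1, h2, hna'⟩
      · -- j = y, k = x, i → x : then i → y = j, adjacent
        rw [hk] at h1
        rw [hj]
        exact absurd (Or.inl ((cov i).mpr (Or.inr h1))) (by rw [hj] at hna'; exact hna')
    · -- i = y, k = x : j → x in rev with (j,k) ≠ (y,x)
      rcases h2 with ⟨h2, _⟩ | ⟨hj, _⟩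
      · rw [hk] at h2
        rw [hi] at hna'
        exact absurd (Or.inr (Or.inl ((cov j).mpr (Or.inr h2)))) hna'
      · rw [hi, hj] at hij
        exact absurd rfl hij
  · rintro ⟨hij, h1, h2, hna⟩
    have hna' : ¬ (G.rev x y hxy).Adj i j := fun h => hna ((rev_adj G hxy i j).mp h)
    have hd1 : (G.rev x y hxy).dir i k := by
      left
      refine ⟨h1, ?_⟩
      rintro ⟨hi, hk⟩
      rw [hk] at h2
      rw [hi] at hij hna
      exact hna (Or.inr (Or.inl (((cov j).mp h2).resolve_left (Ne.symm hij))))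
    have hd2 : (G.rev x y hxy).dir j k := by
      left
      refine ⟨h2, ?_⟩
      rintro ⟨hj, hk⟩
      rw [hk] at h1
      rw [hj] at hij hna
      exact hna (Or.inl (((cov i).mp h1).resolve_left hij))
    exact ⟨hij, hd1, hd2, hna'⟩

lemma pa_rev_y (G : PDG V) {x y : V} (hxy : G.dir x y)
    (cov : ∀ z, G.dir z y ↔ (z = x ∨ G.dir z x)) :
    (G.rev x y hxy).Pa {y} = G.Pa {x} := by
  have hne : x ≠ y := x_ne_y G hxy
  ext z
  simp only [PDG.Pa, Set.mem_setOf_eq, Set.mem_singleton_iff, exists_eq_left]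
  constructor
  · rintro (⟨h, hc⟩ | ⟨hzy, hyx⟩)
    · exact ((cov z).mp h).resolve_left (fun h' => hc ⟨h', rfl⟩)
    · exact absurd hyx.symm hne
  · intro h
    have hzx : z ≠ x := fun h' => G.dir_irrefl x (h' ▸ h)
    exact Or.inl ⟨(cov z).mpr (Or.inr h), fun h' => hzx h'.1⟩

lemma pa_rev_x (G : PDG V) {x y : V} (hxy : G.dir x y) :
    (G.rev x y hxy).Pa {x} = {y} ∪ G.Pa {x} := by
  have hne : x ≠ y := x_ne_y G hxy
  ext z
  simp only [PDG.Pa, Set.mem_setOf_eq, Set.mem_singleton_iff, Set.mem_union,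
    exists_eq_left]
  constructor
  · rintro (⟨h, _⟩ | ⟨hz, _⟩)
    · exact Or.inr h
    · exact Or.inl hz
  · rintro (rfl | h)
    · exact Or.inr ⟨rfl, rfl⟩
    · exact Or.inl ⟨h, fun h' => hne h'.2⟩

lemma pa_G_y (G : PDG V) {x y : V}
    (cov : ∀ z, G.dir z y ↔ (z = x ∨ G.dir z x)) :
    G.Pa {y} = {x} ∪ G.Pa {x} := by
  ext z
  simp only [PDG.Pa, Set.mem_setOf_eq, Set.mem_singleton_iff, Set.mem_union,
    exists_eq_left]
  exact cov z

lemma pa_rev_other (G : PDG V) {x y : V} (hxy : G.dir x y) :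
    ∀ i, i ≠ x → i ≠ y → (G.rev x y hxy).Pa {i} = G.Pa {i} := by
  intro i hix hiy
  ext z
  simp only [PDG.Pa, Set.mem_setOf_eq, Set.mem_singleton_iff, exists_eq_left]
  constructor
  · rintro (⟨h, _⟩ | ⟨hz, hi⟩)
    · exact h
    · exact absurd hi hix
  · intro h
    exact Or.inl ⟨h, fun h' => hiy h'.2⟩

end Aux
section ProbAux

open PDG

variable {V : Type} [Fintype V] [DecidableEq V] {𝒳 : V → Type} [∀ i, Fintype (𝒳 i)]
  [∀ i, Nonempty (𝒳 i)]

lemma marginal_pos (p : (∀ i, 𝒳 i) → ℝ) (hp : IsPositivePMF p) (S : Set V)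
    (v : ∀ i, 𝒳 i) : 0 < marginal p S v := by
  unfold marginal
  apply Finset.sum_pos'
  · intro w _
    split_ifs
    · exact (hp.1 w).le
    · exact le_refl 0
  · refine ⟨v, Finset.mem_univ v, ?_⟩
    rw [if_pos (fun i _ => rfl)]
    exact hp.1 v

lemma condP_swap (p : (∀ i, 𝒳 i) → ℝ) (hp : IsPositivePMF p) (x y : V) (S : Set V)
    (v : ∀ i, 𝒳 i) :
    condP p {x} S v * condP p {y} ({x} ∪ S) v
      = condP p {y} S v * condP p {x} ({y} ∪ S) v := by
  have hU : ({y} : Set V) ∪ ({x} ∪ S) = {x} ∪ ({y} ∪ S) := by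
    rw [← Set.union_assoc, Set.union_comm ({y} : Set V) {x}, Set.union_assoc]
  unfold condP
  rw [hU]
  simp only [Set.singleton_union]
  have h1 := (marginal_pos p hp S v).ne'
  have h2 := (marginal_pos p hp (insert x S) v).ne'
  have h3 := (marginal_pos p hp (insert y S) v).ne'
  field_simp

lemma prod_swap_two (f g : V → ℝ) (x y : V) (hxy : x ≠ y)
    (hfg : ∀ i, i ≠ x → i ≠ y → f i = g i) (h2 : f x * f y = g x * g y) :
    ∏ i : V, f i = ∏ i : V, g i := by
  classical
  rw [← Finset.prod_sdiff (Finset.subset_univ ({x, y} : Finset V)),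
    ← Finset.prod_sdiff (Finset.subset_univ ({x, y} : Finset V))]
  congr 1
  · apply Finset.prod_congr rfl
    intro i hi
    simp only [Finset.mem_sdiff, Finset.mem_insert, Finset.mem_singleton] at hi
    exact hfg i (fun h => hi.2 (Or.inl h)) (fun h => hi.2 (Or.inr h))
  · rw [Finset.prod_pair hxy, Finset.prod_pair hxy]
    exact h2

/-- Number of differing edges between two graphs. -/
noncomputable def diffCount (D₁ D₂ : PDG V) : ℕ :=
  (Finset.univ.filter (fun q : V × V => D₁.dir q.1 q.2 ∧ D₂.dir q.2 q.1)).card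

lemma diffCount_rev_lt (D₁ D₂ : PDG V) {x y : V} (hxy : D₁.dir x y)
    (hyx : D₂.dir y x) :
    diffCount (D₁.rev x y hxy) D₂ < diffCount D₁ D₂ := by
  classical
  have hmem : (x, y) ∈
      Finset.univ.filter (fun q : V × V => D₁.dir q.1 q.2 ∧ D₂.dir q.2 q.1) := by
    simp [hxy, hyx]
  have hsub : Finset.univ.filter
        (fun q : V × V => (D₁.rev x y hxy).dir q.1 q.2 ∧ D₂.dir q.2 q.1) ⊆
      (Finset.univ.filter
        (fun q : V × V => D₁.dir q.1 q.2 ∧ D₂.dir q.2 q.1)).erase (x, y) := by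
    intro q hq
    simp only [Finset.mem_filter, Finset.mem_univ, true_and] at hq
    rcases hq with ⟨hd, h2⟩
    rcases hd with ⟨hd, hne⟩ | ⟨h1', h2'⟩
    · refine Finset.mem_erase.mpr ⟨?_, by simp [hd, h2]⟩
      intro h
      exact hne ⟨congrArg Prod.fst h, congrArg Prod.snd h⟩
    · -- q = (y, x): then D₂.dir x y contradicts D₂.dir y x
      exfalso
      rw [h1', h2'] at h2
      exact D₂.not_dir_dir y x hyx h2
  exact lt_of_le_of_lt (Finset.card_le_card hsub)
    (Finset.card_erase_lt_of_mem hmem)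

lemma prod_rev_eq (p : (∀ i, 𝒳 i) → ℝ) (hp : IsPositivePMF p)
    (D₁ : PDG V) {x y : V} (hxy : D₁.dir x y)
    (cov : ∀ z, D₁.dir z y ↔ (z = x ∨ D₁.dir z x)) (v : ∀ i, 𝒳 i) :
    ∏ i : V, condP p {i} (D₁.Pa {i}) v
      = ∏ i : V, condP p {i} ((D₁.rev x y hxy).Pa {i}) v := by
  have hne : x ≠ y := x_ne_y D₁ hxy
  apply prod_swap_two _ _ x y hne
  · intro i hix hiy
    rw [pa_rev_other D₁ hxy i hix hiy]
  · rw [pa_rev_x D₁ hxy, pa_rev_y D₁ hxy cov, pa_G_y D₁ cov]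
    rw [mul_comm (condP p {x} ({y} ∪ D₁.Pa {x}) v)]
    exact condP_swap p hp x y (D₁.Pa {x}) v

lemma diffCount_zero_prod (D₁ D₂ : PDG V) (h₁ : D₁.IsDAG) (h₂ : D₂.IsDAG)
    (hskel : ∀ i j : V, D₁.Adj i j ↔ D₂.Adj i j)
    (hzero : diffCount D₁ D₂ = 0)
    (p : (∀ i, 𝒳 i) → ℝ) (v : ∀ i, 𝒳 i) :
    ∏ i : V, condP p {i} (D₁.Pa {i}) v = ∏ i : V, condP p {i} (D₂.Pa {i}) v := by
  classical
  have hnd : ∀ a b : V, ¬ (D₁.dir a b ∧ D₂.dir b a) := by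
    intro a b hab
    have : (a, b) ∈ Finset.univ.filter
        (fun q : V × V => D₁.dir q.1 q.2 ∧ D₂.dir q.2 q.1) := by simp [hab.1, hab.2]
    rw [Finset.card_eq_zero.mp hzero] at this
    exact absurd this (Finset.notMem_empty _)
  have hdir : ∀ a b : V, D₁.dir a b ↔ D₂.dir a b := by
    intro a b
    constructor
    · intro h
      rcases dag_adj_cases D₂ h₂ ((hskel a b).mp (Or.inl h)) with h' | h'
      · exact h'
      · exact absurd ⟨h, h'⟩ (hnd a b)
    · intro h
      rcases dag_adj_cases D₁ h₁ ((hskel a b).mpr (Or.inl h)) with h' | h'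
      · exact h'
      · exact absurd ⟨h', h⟩ (hnd b a)
  have hpa : ∀ i : V, D₁.Pa {i} = D₂.Pa {i} := by
    intro i
    ext z
    simp only [PDG.Pa, Set.mem_setOf_eq, Set.mem_singleton_iff, exists_eq_left]
    exact hdir z i
  exact Finset.prod_congr rfl (fun i _ => by rw [hpa i])

lemma main_aux (𝒳 : V → Type) [∀ i, Fintype (𝒳 i)] [∀ i, Nonempty (𝒳 i)]
    (p : (∀ i, 𝒳 i) → ℝ) (hp : IsPositivePMF p) (v : ∀ i, 𝒳 i) :
    ∀ n : ℕ, ∀ D₁ D₂ : PDG V, D₁.IsDAG → D₂.IsDAG →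
      (∀ i j : V, D₁.Adj i j ↔ D₂.Adj i j) →
      (∀ i k j : V, D₁.UC i k j ↔ D₂.UC i k j) →
      diffCount D₁ D₂ ≤ n →
      ∏ i : V, condP p {i} (D₁.Pa {i}) v = ∏ i : V, condP p {i} (D₂.Pa {i}) v := by
  intro n
  induction n with
  | zero =>
    intro D₁ D₂ h₁ h₂ hskel huc hn
    exact diffCount_zero_prod D₁ D₂ h₁ h₂ hskel (Nat.le_zero.mp hn) p v
  | succ n ih =>
    intro D₁ D₂ h₁ h₂ hskel huc hn
    by_cases hz : diffCount D₁ D₂ = 0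
    · exact diffCount_zero_prod D₁ D₂ h₁ h₂ hskel hz p v
    · have hne : ∃ a b, D₁.dir a b ∧ D₂.dir b a := by
        classical
        obtain ⟨q, hq⟩ := Finset.card_pos.mp (Nat.pos_of_ne_zero hz)
        simp only [Finset.mem_filter, Finset.mem_univ, true_and] at hq
        exact ⟨q.1, q.2, hq⟩
      obtain ⟨x, y, hxy, hyx, cov⟩ := exists_covered D₁ D₂ h₁ h₂ hskel huc hne
      set D' := D₁.rev x y hxy with hD'
      have hlt : diffCount D' D₂ < diffCount D₁ D₂ := diffCount_rev_lt D₁ D₂ hxy hyx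
      have hD'dag : D'.IsDAG := rev_isDAG D₁ hxy h₁ cov
      have hD'skel : ∀ i j : V, D'.Adj i j ↔ D₂.Adj i j := fun i j =>
        (rev_adj D₁ hxy i j).trans (hskel i j)
      have hD'uc : ∀ i k j : V, D'.UC i k j ↔ D₂.UC i k j := fun i k j =>
        (rev_uc D₁ hxy cov i k j).trans (huc i k j)
      have h1 := prod_rev_eq p hp D₁ hxy cov v
      rw [h1]
      exact ih D' D₂ hD'dag h₂ hD'skel hD'uc
        (Nat.lt_succ_iff.mp (lt_of_lt_of_le hlt hn))

end ProbAux
/-- Markov-equivalent DAGs (same skeleton, same unshielded colliders) give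
the same DAG factorization of every strictly positive pmf at every configuration. -/
theorem stmt9 {V : Type} [Fintype V] [DecidableEq V]
    (D₁ D₂ : PDG V) (h₁ : D₁.IsDAG) (h₂ : D₂.IsDAG)
    (hskel : ∀ i j : V, D₁.Adj i j ↔ D₂.Adj i j)
    (huc : ∀ i k j : V, D₁.UC i k j ↔ D₂.UC i k j)
    (𝒳 : V → Type) [∀ i, Fintype (𝒳 i)] [∀ i, Nonempty (𝒳 i)]
    (p : (∀ i, 𝒳 i) → ℝ) (hp : IsPositivePMF p) :
    ∀ v : ∀ i, 𝒳 i,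
      ∏ i : V, condP p {i} (D₁.Pa {i}) v = ∏ i : V, condP p {i} (D₂.Pa {i}) v := by
  intro v
  exact main_aux 𝒳 p hp v (diffCount D₁ D₂) D₁ D₂ h₁ h₂ hskel huc le_rfl
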